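/- Let u(x, y) = ((x-1)y + √((x-2)x + y²))/(y² - 1), defined for (x,y) with (x-2)x + y² > 0 and y² ≠ 1. Then u satisfies the inviscid Burgers equation u·∂u/∂x + ∂u/∂y = 0. -/

import Mathlib

/-- `u(x,y) = ((x-1)y + √((x-2)x + y²))/(y² - 1)` satisfies the inviscid
Burgers equation `u uₓ + u_y = 0` on the region `(x-2)x + y² > 0`, `y² ≠ 1`. -/
theorem burgers_staircase (x y : ℝ) (h1 : 0 < (x - 2) * x + y ^ 2) (h2 : y ^ 2 ≠ 1) :
    let u : ℝ → ℝ → ℝ := fun a b =>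
      ((a - 1) * b + Real.sqrt ((a - 2) * a + b ^ 2)) / (b ^ 2 - 1)
    u x y * deriv (fun a => u a y) x + deriv (fun b => u x b) y = 0 := by
  intro u
  set s : ℝ := Real.sqrt ((x - 2) * x + y ^ 2) with hsdef
  have hs : s ^ 2 = (x - 2) * x + y ^ 2 := Real.sq_sqrt h1.le
  have hspos : 0 < s := Real.sqrt_pos.mpr h1
  have hD : y ^ 2 - 1 ≠ 0 := sub_ne_zero.mpr h2
  -- x-derivative
  have hx1 : HasDerivAt (fun a : ℝ => (a - 2) * a + y ^ 2) (2 * x - 2) x := by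
    have h := (((hasDerivAt_id x).sub_const 2).mul (hasDerivAt_id x)).add_const (y ^ 2)
    refine h.congr_deriv ?_; simp only [id_eq]; ring
  have hx2 : HasDerivAt (fun a : ℝ => Real.sqrt ((a - 2) * a + y ^ 2))
      ((2 * x - 2) / (2 * s)) x := by
    have h := (Real.hasDerivAt_sqrt h1.ne').comp x hx1
    refine h.congr_deriv ?_
    rw [← hsdef]; ring
  have hx3 : HasDerivAt (fun a : ℝ => u a y)
      ((1 * y + (2 * x - 2) / (2 * s)) / (y ^ 2 - 1)) x := by
    exact ((((hasDerivAt_id x).sub_const 1).mul_const y).add hx2).div_const _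
  -- y-derivative
  have hy1 : HasDerivAt (fun b : ℝ => (x - 2) * x + b ^ 2) (2 * y) y := by
    have h := (hasDerivAt_pow 2 y).const_add ((x - 2) * x)
    refine h.congr_deriv ?_; simp
  have hy2 : HasDerivAt (fun b : ℝ => Real.sqrt ((x - 2) * x + b ^ 2))
      ((2 * y) / (2 * s)) y := by
    have h := (Real.hasDerivAt_sqrt h1.ne').comp y hy1
    refine h.congr_deriv ?_
    rw [← hsdef]; ring
  have hy3 : HasDerivAt (fun b : ℝ => (x - 1) * b + Real.sqrt ((x - 2) * x + b ^ 2))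
      ((x - 1) * 1 + (2 * y) / (2 * s)) y :=
    (((hasDerivAt_id y).const_mul (x - 1)).add hy2)
  have hy4 : HasDerivAt (fun b : ℝ => b ^ 2 - 1) (2 * y) y := by
    have h := (hasDerivAt_pow 2 y).sub_const 1
    refine h.congr_deriv ?_; simp
  have hy5 : HasDerivAt (fun b : ℝ => u x b)
      ((((x - 1) * 1 + (2 * y) / (2 * s)) * (y ^ 2 - 1) -
        ((x - 1) * y + s) * (2 * y)) / (y ^ 2 - 1) ^ 2) y :=
    hy3.div hy4 hD
  rw [hx3.deriv, hy5.deriv]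
  show ((x - 1) * y + s) / (y ^ 2 - 1) * _ + _ = 0
  have hsne : s ≠ 0 := hspos.ne'
  field_simp
  linear_combination (-y) * hs
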